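/- Let F be a field of characteristic 0 and let x*_i = x_i + x_{i,ε}ε ∈ (F[ε]₂)³, i = 0,…,4, be five points in generic position, i.e. Δ(x_i,x_j,x_k) ≠ 0 for all distinct i, j, k. Then the element Σ_{i=0}^{4} (−1)^i ⟨ r(x_i | x₀,…,x̂_i,…,x₄) ; r_ε(x*_i | x*₀,…,x̂*_i,…,x*₄) ] of ℤ[F[ε]₂] lies in the five-term subgroup R (projected five-term relation in TB₂(F)). -/

import Mathlib

noncomputable section
open Polynomial

/-- The 3×3 determinant of the matrix with columns `u, v, w`. -/
def det3 {R : Type*} [CommRing R] (u v w : Fin 3 → R) : R :=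
  Matrix.det (Matrix.of fun i j => ![u, v, w] j i)

/-- The truncated polynomial ring `F[ε]_ν := F[ε]/(ε^ν)`; `ν = 2` gives the dual numbers. -/
abbrev TruncPoly (F : Type*) [CommRing F] (ν : ℕ) : Type _ := AdjoinRoot ((X : F[X]) ^ ν)

/-- `ε ∈ F[ε]_ν`. -/
def tEps (F : Type*) [CommRing F] (ν : ℕ) : TruncPoly F ν := AdjoinRoot.root _

/-- The inclusion `F → F[ε]_ν`. -/
def tIncl (F : Type*) [CommRing F] (ν : ℕ) : F →+* TruncPoly F ν := AdjoinRoot.of _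

/-- The coefficient of `ε^r` of an element of `F[ε]_ν`. -/
def tCoeff {F : Type*} [CommRing F] {ν : ℕ} (x : TruncPoly F ν) (r : ℕ) : F :=
  ((AdjoinRoot.modByMonicHom (monic_X_pow ν)) x).coeff r

/-- The dual point `x + x'·ε ∈ (F[ε]₂)³`. -/
def dualPt {F : Type*} [CommRing F] (x x' : Fin 3 → F) : Fin 3 → TruncPoly F 2 :=
  fun k => tIncl F 2 (x k) + tIncl F 2 (x' k) * tEps F 2

/-- The projected cross-ratio
`r(y₀|y₁,y₂,y₃,y₄) := Δ(y₀,y₁,y₄)Δ(y₀,y₂,y₃)/(Δ(y₀,y₁,y₃)Δ(y₀,y₂,y₄))` over a field. -/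
def projCr {F : Type*} [Field F] (y0 y1 y2 y3 y4 : Fin 3 → F) : F :=
  det3 y0 y1 y4 * det3 y0 y2 y3 / (det3 y0 y1 y3 * det3 y0 y2 y4)

/-- The projected cross-ratio over `F[ε]₂` (same formula with dual-number determinants). -/
def projCrDual {F : Type*} [Field F] (y0 y1 y2 y3 y4 : Fin 3 → TruncPoly F 2) :
    TruncPoly F 2 :=
  det3 y0 y1 y4 * det3 y0 y2 y3 * Ring.inverse (det3 y0 y1 y3 * det3 y0 y2 y4)

/-- `ℤ[F[ε]₂]`, the free abelian group on the set `F[ε]₂`. -/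
abbrev ZDual (F : Type*) [CommRing F] := FreeAbelianGroup (TruncPoly F 2)

/-- `⟨a;a'] := [a + a'ε] − [a] ∈ ℤ[F[ε]₂]`. -/
def bracket (F : Type*) [CommRing F] (a a' : F) : ZDual F :=
  FreeAbelianGroup.of (tIncl F 2 a + tIncl F 2 a' * tEps F 2)
    - FreeAbelianGroup.of (tIncl F 2 a)

/-- The subgroup `R ⊆ ℤ[F[ε]₂]` generated by the five-term elements. -/
def fiveTermSubgroup (F : Type*) [Field F] : AddSubgroup (ZDual F) :=
  AddSubgroup.closure { z | ∃ a b a' b' : F, a ≠ 0 ∧ a ≠ 1 ∧ b ≠ 0 ∧ b ≠ 1 ∧ a ≠ b ∧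
    z = bracket F a a' - bracket F b b'
        + bracket F (b / a) ((a * b' - a' * b) / a ^ 2)
        - bracket F ((1 - b) / (1 - a)) (((1 - b) * a' - (1 - a) * b') / (1 - a) ^ 2)
        + bracket F (a * (1 - b) / (b * (1 - a)))
            ((b * (1 - b) * a' - a * (1 - a) * b') / (b * (1 - a)) ^ 2) }

namespace FiveT
variable {F : Type*} [Field F]

def nf (F : Type*) [CommRing F] (p q : F) : TruncPoly F 2 :=
  tIncl F 2 p + tIncl F 2 q * tEps F 2

lemma nf_eq_mk (p q : F) : nf F p q = AdjoinRoot.mk ((X : F[X])^2) (C q * X + C p) := by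
  show AdjoinRoot.mk _ (C p) + AdjoinRoot.mk _ (C q) * AdjoinRoot.mk _ X = _
  rw [← map_mul, ← map_add]
  exact congrArg _ (by ring)

lemma tCoeff_nf (p q : F) (r : ℕ) : tCoeff (nf F p q) r = (C q * X + C p).coeff r := by
  rw [nf_eq_mk, tCoeff, AdjoinRoot.modByMonicHom_mk,
    (Polynomial.modByMonic_eq_self_iff (monic_X_pow 2)).2]
  rw [degree_X_pow]
  exact lt_of_le_of_lt degree_linear_le (by norm_num)

lemma tCoeff_nf0 (p q : F) : tCoeff (nf F p q) 0 = p := by simp [tCoeff_nf]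
lemma tCoeff_nf1 (p q : F) : tCoeff (nf F p q) 1 = q := by simp [tCoeff_nf]

lemma nf_decompose (z : TruncPoly F 2) : z = nf F (tCoeff z 0) (tCoeff z 1) := by
  obtain ⟨f, rfl⟩ := AdjoinRoot.mk_surjective (g := (X : F[X])^2) z
  have h1 : AdjoinRoot.mk ((X:F[X])^2) f = AdjoinRoot.mk _ (f %ₘ X^2) := by
    rw [AdjoinRoot.mk_eq_mk]
    exact ⟨f /ₘ X^2, by rw [modByMonic_eq_sub_mul_div f (X^2)]; ring⟩
  have hdeg : (f %ₘ (X:F[X])^2).degree ≤ 1 := by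
    have := degree_modByMonic_lt f (monic_X_pow (R := F) 2)
    rw [degree_X_pow] at this
    exact Order.le_of_lt_succ (by exact_mod_cast this)
  have h2 : f %ₘ (X:F[X])^2 = C ((f %ₘ X^2).coeff 1) * X + C ((f %ₘ X^2).coeff 0) :=
    eq_X_add_C_of_degree_le_one hdeg
  have hC : ∀ r, tCoeff (AdjoinRoot.mk ((X:F[X])^2) f) r = (f %ₘ X^2).coeff r := by
    intro r; rw [tCoeff, AdjoinRoot.modByMonicHom_mk]
  rw [hC, hC, nf_eq_mk, h1]
  exact congrArg _ h2

lemma nf_injective {p q p' q' : F} (h : nf F p q = nf F p' q') : p = p' ∧ q = q' := by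
  constructor
  · have := congrArg (fun z => tCoeff z 0) h; simpa [tCoeff_nf0] using this
  · have := congrArg (fun z => tCoeff z 1) h; simpa [tCoeff_nf1] using this

lemma eps_sq : (tEps F 2) ^ 2 = 0 := by
  have := AdjoinRoot.eval₂_root ((X : F[X])^2)
  simpa [tEps] using this

lemma nf_mul (p q p' q' : F) : nf F p q * nf F p' q' = nf F (p * p') (p * q' + q * p') := by
  simp only [nf, map_add, map_mul]
  linear_combination (tIncl F 2 q * tIncl F 2 q') * eps_sq (F := F)

lemma nf_one : (1 : TruncPoly F 2) = nf F 1 0 := by simp [nf]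
lemma nf_sub (p q p' q' : F) : nf F p q - nf F p' q' = nf F (p - p') (q - q') := by
  simp only [nf, map_sub]; ring
lemma nf_one_sub (p q : F) : 1 - nf F p q = nf F (1 - p) (-q) := by
  rw [nf_one (F := F), nf_sub]; norm_num
lemma nf_neg (p q : F) : - nf F p q = nf F (-p) (-q) := by simp only [nf, map_neg]; ring

lemma isUnit_nf {p : F} (q : F) (hp : p ≠ 0) : IsUnit (nf F p q) := by
  refine IsUnit.of_mul_eq_one (nf F p⁻¹ (-(q / p^2))) ?_
  rw [nf_mul]
  rw [show p * p⁻¹ = 1 by field_simp, show p * -(q / p ^ 2) + q * p⁻¹ = 0 by field_simp; ring]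
  exact nf_one.symm

lemma inverse_nf {p : F} (q : F) (hp : p ≠ 0) :
    Ring.inverse (nf F p q) = nf F p⁻¹ (-(q / p^2)) := by
  have h1 : nf F p q * nf F p⁻¹ (-(q / p^2)) = 1 := by
    rw [nf_mul, show p * p⁻¹ = 1 by field_simp,
      show p * -(q / p ^ 2) + q * p⁻¹ = 0 by field_simp; ring]
    exact nf_one.symm
  have hu := isUnit_nf (F := F) q hp
  calc Ring.inverse (nf F p q) = Ring.inverse (nf F p q) * (nf F p q * nf F p⁻¹ (-(q/p^2))) := by
        rw [h1, mul_one]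
    _ = nf F p⁻¹ (-(q/p^2)) := by rw [← mul_assoc, Ring.inverse_mul_cancel _ hu, one_mul]



section Det
variable {R : Type*} [CommRing R]

lemma det3_expand (u v w : Fin 3 → R) :
    det3 u v w = u 0 * (v 1 * w 2 - v 2 * w 1) - v 0 * (u 1 * w 2 - u 2 * w 1)
      + w 0 * (u 1 * v 2 - u 2 * v 1) := by
  simp [det3, Matrix.det_fin_three]
  ring

lemma det3_swap01 (u v w : Fin 3 → R) : det3 v u w = - det3 u v w := by
  simp [det3_expand]; ring
lemma det3_swap12 (u v w : Fin 3 → R) : det3 u w v = - det3 u v w := by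
  simp [det3_expand]; ring
lemma det3_rot (u v w : Fin 3 → R) : det3 w u v = det3 u v w := by
  simp [det3_expand]; ring

lemma pluecker (v0 v1 v2 v3 v4 : Fin 3 → R) :
    det3 v0 v1 v2 * det3 v0 v3 v4 - det3 v0 v1 v3 * det3 v0 v2 v4
      + det3 v0 v1 v4 * det3 v0 v2 v3 = 0 := by
  simp only [det3_expand]; ring

end Det

variable {F : Type*} [Field F]

lemma nf_add (p q p' q' : F) : nf F p q + nf F p' q' = nf F (p + p') (q + q') := by
  simp only [nf, map_add]; ring

lemma dualPt_nf (x x' : Fin 3 → F) (k : Fin 3) : dualPt x x' k = nf F (x k) (x' k) := rfl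

lemma det3_dualPt (a a' b b' c c' : Fin 3 → F) :
    det3 (dualPt a a') (dualPt b b') (dualPt c c')
      = nf F (det3 a b c) (det3 a' b c + det3 a b' c + det3 a b c') := by
  simp only [det3_expand, dualPt_nf, nf_mul, nf_sub, nf_add]
  exact congrArg₂ (nf F) (by ring) (by ring)

end FiveT


namespace FiveT
variable {F : Type*} [Field F]

lemma bracket_zero (a : F) : bracket F a 0 = 0 := by
  simp [bracket]

lemma genMem {a b : F} (a' b' : F) (ha0 : a ≠ 0) (ha1 : a ≠ 1) (hb0 : b ≠ 0) (hb1 : b ≠ 1)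
    (hab : a ≠ b) :
    bracket F a a' - bracket F b b'
        + bracket F (b / a) ((a * b' - a' * b) / a ^ 2)
        - bracket F ((1 - b) / (1 - a)) (((1 - b) * a' - (1 - a) * b') / (1 - a) ^ 2)
        + bracket F (a * (1 - b) / (b * (1 - a)))
            ((b * (1 - b) * a' - a * (1 - a) * b') / (b * (1 - a)) ^ 2)
      ∈ fiveTermSubgroup F :=
  AddSubgroup.subset_closure ⟨a, b, a', b', ha0, ha1, hb0, hb1, hab, rfl⟩

lemma E0mem {A B : F} (B' : F) (hA0 : A ≠ 0) (hA1 : A ≠ 1) (hB0 : B ≠ 0) (hB1 : B ≠ 1)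
    (hAB : A ≠ B) :
    bracket F (B/A) (B'/A) + bracket F (A/B) (-(A*B'/B^2))
      - bracket F B B' - bracket F B⁻¹ (-(B'/B^2)) ∈ fiveTermSubgroup F := by
  have hA1' : (1:F) - A ≠ 0 := sub_ne_zero.2 (Ne.symm hA1)
  have hB1' : (1:F) - B ≠ 0 := sub_ne_zero.2 (Ne.symm hB1)
  have hAi0 : A⁻¹ ≠ 0 := inv_ne_zero hA0
  have hAi1 : A⁻¹ ≠ (1:F) := by
    intro hc; exact hA1 (by field_simp at hc; simp [hc])
  have hBi0 : B⁻¹ ≠ 0 := inv_ne_zero hB0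
  have hBi1 : B⁻¹ ≠ (1:F) := by
    intro hc; exact hB1 (by field_simp at hc; simp [hc])
  have hABi : A⁻¹ ≠ B⁻¹ := fun hc => hAB (by
    have := congrArg (·⁻¹) hc; simpa using this)
  have g1 := genMem (F := F) (a := A) (b := B) 0 B' hA0 hA1 hB0 hB1 hAB
  have g2 := genMem (F := F) (a := A⁻¹) (b := B⁻¹) 0 (-(B'/B^2)) hAi0 hAi1 hBi0 hBi1 hABi
  have key :
      bracket F (B/A) (B'/A) + bracket F (A/B) (-(A*B'/B^2))
        - bracket F B B' - bracket F B⁻¹ (-(B'/B^2))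
      = (bracket F A 0 - bracket F B B'
        + bracket F (B / A) ((A * B' - 0 * B) / A ^ 2)
        - bracket F ((1 - B) / (1 - A)) (((1 - B) * 0 - (1 - A) * B') / (1 - A) ^ 2)
        + bracket F (A * (1 - B) / (B * (1 - A)))
            ((B * (1 - B) * 0 - A * (1 - A) * B') / (B * (1 - A)) ^ 2))
      + (bracket F A⁻¹ 0 - bracket F B⁻¹ (-(B'/B^2))
        + bracket F (B⁻¹ / A⁻¹) ((A⁻¹ * (-(B'/B^2)) - 0 * B⁻¹) / A⁻¹ ^ 2)
        - bracket F ((1 - B⁻¹) / (1 - A⁻¹))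
            (((1 - B⁻¹) * 0 - (1 - A⁻¹) * (-(B'/B^2))) / (1 - A⁻¹) ^ 2)
        + bracket F (A⁻¹ * (1 - B⁻¹) / (B⁻¹ * (1 - A⁻¹)))
            ((B⁻¹ * (1 - B⁻¹) * 0 - A⁻¹ * (1 - A⁻¹) * (-(B'/B^2))) / (B⁻¹ * (1 - A⁻¹)) ^ 2)) := by
    have hA1'' : A - 1 ≠ 0 := sub_ne_zero.2 hA1
    have hB1'' : B - 1 ≠ 0 := sub_ne_zero.2 hB1
    have e1 : (1:F) - B⁻¹ = (B-1)/B := by field_simp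
    have e2 : (1:F) - A⁻¹ = (A-1)/A := by field_simp
    rw [bracket_zero, bracket_zero]
    rw [show (A * B' - 0 * B) / A ^ 2 = B'/A by field_simp; ring]
    rw [show B⁻¹ / A⁻¹ = A/B by field_simp]
    rw [show (A⁻¹ * (-(B'/B^2)) - 0 * B⁻¹) / A⁻¹ ^ 2 = -(A*B'/B^2) by field_simp; ring]
    rw [show A⁻¹ * (1 - B⁻¹) / (B⁻¹ * (1 - A⁻¹)) = (1 - B) / (1 - A) by
      rw [e1, e2]; field_simp; ring]
    rw [show (B⁻¹ * (1 - B⁻¹) * 0 - A⁻¹ * (1 - A⁻¹) * (-(B'/B^2))) / (B⁻¹ * (1 - A⁻¹)) ^ 2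
        = ((1 - B) * 0 - (1 - A) * B') / (1 - A) ^ 2 by rw [e1, e2]; field_simp; ring]
    rw [show (1 - B⁻¹) / (1 - A⁻¹) = A * (1 - B) / (B * (1 - A)) by
      rw [e1, e2]; field_simp; ring]
    rw [show ((1 - B⁻¹) * 0 - (1 - A⁻¹) * (-(B'/B^2))) / (1 - A⁻¹) ^ 2
        = (B * (1 - B) * 0 - A * (1 - A) * B') / (B * (1 - A)) ^ 2 by
      rw [e1, e2]; field_simp; ring]
    abel
  rw [key]
  exact AddSubgroup.add_mem _ g1 g2

end FiveT
namespace FiveT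
variable {F : Type*} [Field F]

lemma JsqMem {g : F} (γ : F) (hg0 : g ≠ 0) (hg1 : g ≠ 1) (hgm1 : g ≠ -1) :
    bracket F ((g^2)⁻¹) (-2*γ/g^3) + bracket F (g^2) (2*γ*g) ∈ fiveTermSubgroup F := by
  have hgi0 : g⁻¹ ≠ 0 := inv_ne_zero hg0
  have hgi1 : g⁻¹ ≠ (1:F) := by
    intro hc; exact hg1 (by field_simp at hc; simp [hc])
  have hgig : g⁻¹ ≠ g := by
    intro hc
    have h2 : g * g = 1 := by
      have h3 := mul_inv_cancel₀ hg0
      rwa [hc] at h3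
    rcases mul_self_eq_one_iff.1 h2 with h | h
    · exact hg1 h
    · exact hgm1 h
  have hggi : g ≠ g⁻¹ := Ne.symm hgig
  have hg1' : g - 1 ≠ 0 := sub_ne_zero.2 hg1
  have hg1'' : (1:F) - g ≠ 0 := sub_ne_zero.2 (Ne.symm hg1)
  have e2 : (1:F) - g⁻¹ = (g-1)/g := by field_simp
  have g1 := genMem (F := F) (a := g) (b := g⁻¹) γ (-(γ/g^2)) hg0 hg1 hgi0 hgi1 hggi
  have g2 := genMem (F := F) (a := g⁻¹) (b := g) (-(γ/g^2)) γ hgi0 hgi1 hg0 hg1 hgig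
  have key : bracket F ((g^2)⁻¹) (-2*γ/g^3) + bracket F (g^2) (2*γ*g)
      = (bracket F g γ - bracket F g⁻¹ (-(γ/g^2))
        + bracket F (g⁻¹ / g) ((g * (-(γ/g^2)) - γ * g⁻¹) / g ^ 2)
        - bracket F ((1 - g⁻¹) / (1 - g)) (((1 - g⁻¹) * γ - (1 - g) * (-(γ/g^2))) / (1 - g) ^ 2)
        + bracket F (g * (1 - g⁻¹) / (g⁻¹ * (1 - g)))
            ((g⁻¹ * (1 - g⁻¹) * γ - g * (1 - g) * (-(γ/g^2))) / (g⁻¹ * (1 - g)) ^ 2))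
      + (bracket F g⁻¹ (-(γ/g^2)) - bracket F g γ
        + bracket F (g / g⁻¹) ((g⁻¹ * γ - (-(γ/g^2)) * g) / g⁻¹ ^ 2)
        - bracket F ((1 - g) / (1 - g⁻¹)) (((1 - g) * (-(γ/g^2)) - (1 - g⁻¹) * γ) / (1 - g⁻¹) ^ 2)
        + bracket F (g⁻¹ * (1 - g) / (g * (1 - g⁻¹)))
            ((g * (1 - g) * (-(γ/g^2)) - g⁻¹ * (1 - g⁻¹) * γ) / (g * (1 - g⁻¹)) ^ 2)) := by
    rw [show g⁻¹ / g = (g^2)⁻¹ by rw [sq, mul_inv, division_def]]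
    rw [show (g * (-(γ/g^2)) - γ * g⁻¹) / g ^ 2 = -2*γ/g^3 by field_simp; ring]
    rw [show g / g⁻¹ = g^2 by field_simp]
    rw [show (g⁻¹ * γ - (-(γ/g^2)) * g) / g⁻¹ ^ 2 = 2*γ*g by field_simp; ring]
    rw [show (1 - g⁻¹) / (1 - g) = -g⁻¹ by rw [e2]; field_simp; ring]
    rw [show ((1 - g⁻¹) * γ - (1 - g) * (-(γ/g^2))) / (1 - g) ^ 2 = γ/g^2 by
      rw [e2]; field_simp; ring]
    rw [show g * (1 - g⁻¹) / (g⁻¹ * (1 - g)) = -g by rw [e2]; field_simp; ring]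
    rw [show (g⁻¹ * (1 - g⁻¹) * γ - g * (1 - g) * (-(γ/g^2))) / (g⁻¹ * (1 - g)) ^ 2 = -γ by
      rw [e2]; field_simp; ring]
    rw [show (1 - g) / (1 - g⁻¹) = -g by rw [e2]; field_simp; ring]
    rw [show ((1 - g) * (-(γ/g^2)) - (1 - g⁻¹) * γ) / (1 - g⁻¹) ^ 2 = -γ by
      rw [e2]; field_simp; ring]
    rw [show g⁻¹ * (1 - g) / (g * (1 - g⁻¹)) = -g⁻¹ by rw [e2]; field_simp; ring]
    rw [show (g * (1 - g) * (-(γ/g^2)) - g⁻¹ * (1 - g⁻¹) * γ) / (g * (1 - g⁻¹)) ^ 2 = γ/g^2 by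
      rw [e2]; field_simp; ring]
    abel
  rw [key]
  exact AddSubgroup.add_mem _ g1 g2

lemma JMem [CharZero F] {x : F} (x' : F) (hx0 : x ≠ 0) (hx1 : x ≠ 1) :
    bracket F x x' + bracket F x⁻¹ (-(x'/x^2)) ∈ fiveTermSubgroup F := by
  obtain ⟨g, hg0, hg1, hgm1, hg2x⟩ :
      ∃ g : F, g ≠ 0 ∧ g ≠ 1 ∧ g ≠ -1 ∧ g^2 * x ≠ 1 := by
    by_cases hx4 : x = (4:F)⁻¹
    · refine ⟨3, by norm_num, by norm_num, by norm_num, ?_⟩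
      rw [hx4]
      intro hcc
      have h9 : (9:F) * (4:F)⁻¹ = 1 := by rw [show (9:F) = 3^2 by norm_num]; exact hcc
      have : (9:F) = 4 := by
        have h4 : (4:F) ≠ 0 := by norm_num
        field_simp at h9; exact h9
      norm_num at this
    · refine ⟨2, by norm_num, by norm_num, by norm_num, ?_⟩
      intro hcc
      apply hx4
      have h16 : (4:F) * x = 1 := by rw [show (4:F) = 2^2 by norm_num]; exact hcc
      exact eq_inv_of_mul_eq_one_left (by linear_combination h16)
  have hgsq0 : g^2 ≠ 0 := pow_ne_zero _ hg0
  set A : F := (g^2 * x)⁻¹ with hA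
  set B : F := (g^2)⁻¹ with hB
  set B' : F := x' * A with hB'
  have hA0 : A ≠ 0 := by rw [hA]; exact inv_ne_zero (mul_ne_zero hgsq0 hx0)
  have hA1 : A ≠ 1 := by
    rw [hA]; intro hc; exact hg2x (by rwa [inv_eq_one] at hc)
  have hB0 : B ≠ 0 := by rw [hB]; exact inv_ne_zero hgsq0
  have hB1 : B ≠ 1 := by
    rw [hB]; intro hc; rw [inv_eq_one] at hc
    rcases mul_self_eq_one_iff.1 (by rw [← hc]; ring) with h | h
    · exact hg1 h
    · exact hgm1 h
  have hAB : A ≠ B := by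
    rw [hA, hB]; intro hc
    have h2 := inv_injective hc
    exact hx1 (mul_left_cancel₀ hgsq0 (by rw [h2]; ring))
  have h1 := E0mem (F := F) (A := A) (B := B) B' hA0 hA1 hB0 hB1 hAB
  have h2 := JsqMem (F := F) (g := g) (-(B'*g^3)/2) hg0 hg1 hgm1
  have c1 : B / A = x := by rw [hA, hB]; field_simp
  have c2 : B' / A = x' := by rw [hB']; field_simp
  have c3 : A / B = x⁻¹ := by rw [hA, hB]; field_simp; try ring
  have c4 : -(A * B' / B^2) = -(x'/x^2) := by
    rw [hB', hA, hB]; field_simp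
  have c5 : (-2 : F) * (-(B'*g^3)/2) / g^3 = B' := by field_simp
  have c6 : (2:F) * (-(B'*g^3)/2) * g = -(B'/B^2) := by rw [hB]; field_simp
  rw [c1, c2, c3, c4] at h1
  rw [c5, c6] at h2
  rw [show ((g^2)⁻¹ : F) = B from hB.symm] at h2
  rw [show (g^2 : F) = B⁻¹ by rw [hB, inv_inv]] at h2
  have keq : (bracket F x x' + bracket F x⁻¹ (-(x'/x^2)) - bracket F B B'
      - bracket F B⁻¹ (-(B'/B^2))) + (bracket F B B' + bracket F B⁻¹ (-(B'/B^2)))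
      = bracket F x x' + bracket F x⁻¹ (-(x'/x^2)) := by abel
  rw [← keq]
  exact AddSubgroup.add_mem _ h1 h2

end FiveT
namespace FiveT
variable {F : Type*} [Field F]

lemma assemble [CharZero F] (a0 a1 b0 b1 r2 s2 r3 s3 r4 s4 : F)
    (hna0 : a0 ≠ 0) (hna1 : a0 ≠ 1) (hnb0 : b0 ≠ 0) (hnb1 : b0 ≠ 1) (hab : a0 ≠ b0)
    (rel2base : r2 * a0 = b0) (rel2eps : r2 * a1 + s2 * a0 = b1)
    (rel3base : r3 * (a0 * (1 - b0)) = b0 * (1 - a0))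
    (rel3eps : r3 * (a0 * (-b1) + a1 * (1 - b0)) + s3 * (a0 * (1 - b0))
        = b0 * (-a1) + b1 * (1 - a0))
    (rel4base : r4 * (1 - b0) = 1 - a0) (rel4eps : r4 * (-b1) + s4 * (1 - b0) = -a1) :
    bracket F a0 a1 - bracket F b0 b1 + bracket F r2 s2 - bracket F r3 s3 + bracket F r4 s4
      ∈ fiveTermSubgroup F := by
  have h1a : (1:F) - a0 ≠ 0 := sub_ne_zero.2 (Ne.symm hna1)
  have h1b : (1:F) - b0 ≠ 0 := sub_ne_zero.2 (Ne.symm hnb1)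
  have hX : a0 * (1 - b0) ≠ 0 := mul_ne_zero hna0 h1b
  have hW : b0 * (1 - a0) ≠ 0 := mul_ne_zero hnb0 h1a
  -- identify r2, s2
  have f2 : r2 = b0 / a0 := by rw [eq_div_iff hna0]; exact rel2base
  have f2e : s2 = (a0 * b1 - a1 * b0) / a0 ^ 2 := by
    rw [eq_div_iff (pow_ne_zero 2 hna0)]
    linear_combination a0 * rel2eps - a1 * rel2base
  -- w and c
  set w : F := (1 - b0) / (1 - a0) with hw
  set wε : F := ((1 - b0) * a1 - (1 - a0) * b1) / (1 - a0) ^ 2 with hwe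
  set c : F := a0 * (1 - b0) / (b0 * (1 - a0)) with hc
  set cε : F := (b0 * (1 - b0) * a1 - a0 * (1 - a0) * b1) / (b0 * (1 - a0)) ^ 2 with hce
  have hw0 : w ≠ 0 := div_ne_zero h1b h1a
  have hw1 : w ≠ 1 := by
    rw [hw]; intro hcon
    rw [div_eq_iff h1a, one_mul] at hcon
    exact hab (by linear_combination hcon)
  have hc0 : c ≠ 0 := div_ne_zero hX hW
  have hc1 : c ≠ 1 := by
    rw [hc]; intro hcon
    rw [div_eq_iff hW, one_mul] at hcon
    exact hab (by linear_combination hcon)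
  -- identify r3, s3
  have f3 : r3 = c⁻¹ := by
    rw [hc, inv_div, eq_div_iff hX]; exact rel3base
  have key3 : s3 * (a0 * (1 - b0)) ^ 2 = -(b0 * (1 - b0) * a1 - a0 * (1 - a0) * b1) := by
    linear_combination (a0 * (1 - b0)) * rel3eps - (a0 * (-b1) + a1 * (1 - b0)) * rel3base
  have f3e : s3 = -(cε / c ^ 2) := by
    rw [hce, hc]
    rw [show -((b0 * (1 - b0) * a1 - a0 * (1 - a0) * b1) / (b0 * (1 - a0)) ^ 2
        / (a0 * (1 - b0) / (b0 * (1 - a0))) ^ 2)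
        = -((b0 * (1 - b0) * a1 - a0 * (1 - a0) * b1) / (a0 * (1 - b0)) ^ 2) by
      field_simp]
    rw [← neg_div, eq_div_iff (pow_ne_zero 2 hX)]
    linear_combination key3
  -- identify r4, s4
  have f4 : r4 = w⁻¹ := by
    rw [hw, inv_div, eq_div_iff h1b]; exact rel4base
  have key4 : s4 * (1 - b0) ^ 2 = -((1 - b0) * a1 - (1 - a0) * b1) := by
    linear_combination (1 - b0) * rel4eps + b1 * rel4base
  have f4e : s4 = -(wε / w ^ 2) := by
    rw [hwe, hw]
    rw [show -(((1 - b0) * a1 - (1 - a0) * b1) / (1 - a0) ^ 2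
        / ((1 - b0) / (1 - a0)) ^ 2)
        = -(((1 - b0) * a1 - (1 - a0) * b1) / (1 - b0) ^ 2) by
      field_simp]
    rw [← neg_div, eq_div_iff (pow_ne_zero 2 h1b)]
    linear_combination key4
  -- the three members
  have gV := genMem (F := F) (a := a0) (b := b0) a1 b1 hna0 hna1 hnb0 hnb1 hab
  have gJw := JMem (F := F) (x := w) wε hw0 hw1
  have gJc := JMem (F := F) (x := c) cε hc0 hc1
  rw [f2, f2e, f3, f3e, f4, f4e]
  have key : bracket F a0 a1 - bracket F b0 b1 + bracket F (b0 / a0) ((a0 * b1 - a1 * b0) / a0 ^ 2)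
      - bracket F c⁻¹ (-(cε / c ^ 2)) + bracket F w⁻¹ (-(wε / w ^ 2))
      = ((bracket F a0 a1 - bracket F b0 b1
        + bracket F (b0 / a0) ((a0 * b1 - a1 * b0) / a0 ^ 2)
        - bracket F ((1 - b0) / (1 - a0)) (((1 - b0) * a1 - (1 - a0) * b1) / (1 - a0) ^ 2)
        + bracket F (a0 * (1 - b0) / (b0 * (1 - a0)))
            ((b0 * (1 - b0) * a1 - a0 * (1 - a0) * b1) / (b0 * (1 - a0)) ^ 2))
        + (bracket F w wε + bracket F w⁻¹ (-(wε / w ^ 2))))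
        - (bracket F c cε + bracket F c⁻¹ (-(cε / c ^ 2))) := by
    rw [hw, hwe, hc, hce]
    abel
  rw [key]
  exact AddSubgroup.sub_mem _ (AddSubgroup.add_mem _ gV gJw) gJc

end FiveT
namespace FiveT
variable {F : Type*} [Field F]
lemma projCrDual_mul (y0 y1 y2 y3 y4 : Fin 3 → TruncPoly F 2)
    (hu : IsUnit (det3 y0 y1 y3 * det3 y0 y2 y4)) :
    projCrDual y0 y1 y2 y3 y4 * (det3 y0 y1 y3 * det3 y0 y2 y4)
      = det3 y0 y1 y4 * det3 y0 y2 y3 := by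
  rw [projCrDual, mul_assoc, Ring.inverse_mul_cancel _ hu, mul_one]
end FiveT

/-- **Projected five-term relation in `TB₂(F)`** (Lemma 5pt): for five points
`x*_i = x_i + x'_i ε` in generic position,
`Σ_{i=0}^{4} (−1)^i ⟨ r(x_i|x₀,…,x̂_i,…,x₄) ; r_ε(x*_i|x*₀,…,x̂*_i,…,x*₄) ]` lies in the
five-term subgroup `R`. -/
theorem projected_five_term (F : Type*) [Field F] [CharZero F]
    (x x' : Fin 5 → Fin 3 → F)
    (h : ∀ i j k : Fin 5, i ≠ j → i ≠ k → j ≠ k → det3 (x i) (x j) (x k) ≠ 0) :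
    (∑ i : Fin 5, ((-1 : ℤ) ^ (i : ℕ)) •
      bracket F
        (projCr (x i) (x (i.succAbove 0)) (x (i.succAbove 1)) (x (i.succAbove 2))
          (x (i.succAbove 3)))
        (tCoeff
          (projCrDual (dualPt (x i) (x' i))
            (dualPt (x (i.succAbove 0)) (x' (i.succAbove 0)))
            (dualPt (x (i.succAbove 1)) (x' (i.succAbove 1)))
            (dualPt (x (i.succAbove 2)) (x' (i.succAbove 2)))
            (dualPt (x (i.succAbove 3)) (x' (i.succAbove 3)))) 1))
      ∈ fiveTermSubgroup F := by
  rw [Fin.sum_univ_five]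
  simp only [show ((0:Fin 5).succAbove 0) = 1 from rfl,
    show ((0:Fin 5).succAbove 1) = 2 from rfl,
    show ((0:Fin 5).succAbove 2) = 3 from rfl,
    show ((0:Fin 5).succAbove 3) = 4 from rfl,
    show ((1:Fin 5).succAbove 0) = 0 from rfl,
    show ((1:Fin 5).succAbove 1) = 2 from rfl,
    show ((1:Fin 5).succAbove 2) = 3 from rfl,
    show ((1:Fin 5).succAbove 3) = 4 from rfl,
    show ((2:Fin 5).succAbove 0) = 0 from rfl,
    show ((2:Fin 5).succAbove 1) = 1 from rfl,
    show ((2:Fin 5).succAbove 2) = 3 from rfl,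
    show ((2:Fin 5).succAbove 3) = 4 from rfl,
    show ((3:Fin 5).succAbove 0) = 0 from rfl,
    show ((3:Fin 5).succAbove 1) = 1 from rfl,
    show ((3:Fin 5).succAbove 2) = 2 from rfl,
    show ((3:Fin 5).succAbove 3) = 4 from rfl,
    show ((4:Fin 5).succAbove 0) = 0 from rfl,
    show ((4:Fin 5).succAbove 1) = 1 from rfl,
    show ((4:Fin 5).succAbove 2) = 2 from rfl,
    show ((4:Fin 5).succAbove 3) = 3 from rfl,
    show (((0:Fin 5)):ℕ) = 0 from rfl,
    show (((1:Fin 5)):ℕ) = 1 from rfl,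
    show (((2:Fin 5)):ℕ) = 2 from rfl,
    show (((3:Fin 5)):ℕ) = 3 from rfl,
    show (((4:Fin 5)):ℕ) = 4 from rfl,
    show ((-1:ℤ)^(0:ℕ)) = 1 from by norm_num,
    show ((-1:ℤ)^(1:ℕ)) = -1 from by norm_num,
    show ((-1:ℤ)^(2:ℕ)) = 1 from by norm_num,
    show ((-1:ℤ)^(3:ℕ)) = -1 from by norm_num,
    show ((-1:ℤ)^(4:ℕ)) = 1 from by norm_num,
    one_smul,
    neg_one_zsmul]
  have hn012 : det3 (x 0) (x 1) (x 2) ≠ 0 := h 0 1 2 (by decide) (by decide) (by decide)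
  have hn013 : det3 (x 0) (x 1) (x 3) ≠ 0 := h 0 1 3 (by decide) (by decide) (by decide)
  have hn014 : det3 (x 0) (x 1) (x 4) ≠ 0 := h 0 1 4 (by decide) (by decide) (by decide)
  have hn023 : det3 (x 0) (x 2) (x 3) ≠ 0 := h 0 2 3 (by decide) (by decide) (by decide)
  have hn024 : det3 (x 0) (x 2) (x 4) ≠ 0 := h 0 2 4 (by decide) (by decide) (by decide)
  have hn034 : det3 (x 0) (x 3) (x 4) ≠ 0 := h 0 3 4 (by decide) (by decide) (by decide)
  have hn123 : det3 (x 1) (x 2) (x 3) ≠ 0 := h 1 2 3 (by decide) (by decide) (by decide)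
  have hn124 : det3 (x 1) (x 2) (x 4) ≠ 0 := h 1 2 4 (by decide) (by decide) (by decide)
  have hn134 : det3 (x 1) (x 3) (x 4) ≠ 0 := h 1 3 4 (by decide) (by decide) (by decide)
  have hn234 : det3 (x 2) (x 3) (x 4) ≠ 0 := h 2 3 4 (by decide) (by decide) (by decide)
  obtain ⟨e012, hD012⟩ : ∃ e, det3 (dualPt (x 0) (x' 0)) (dualPt (x 1) (x' 1)) (dualPt (x 2) (x' 2)) = FiveT.nf F (det3 (x 0) (x 1) (x 2)) e :=
    ⟨_, FiveT.det3_dualPt _ _ _ _ _ _⟩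
  obtain ⟨e013, hD013⟩ : ∃ e, det3 (dualPt (x 0) (x' 0)) (dualPt (x 1) (x' 1)) (dualPt (x 3) (x' 3)) = FiveT.nf F (det3 (x 0) (x 1) (x 3)) e :=
    ⟨_, FiveT.det3_dualPt _ _ _ _ _ _⟩
  obtain ⟨e014, hD014⟩ : ∃ e, det3 (dualPt (x 0) (x' 0)) (dualPt (x 1) (x' 1)) (dualPt (x 4) (x' 4)) = FiveT.nf F (det3 (x 0) (x 1) (x 4)) e :=
    ⟨_, FiveT.det3_dualPt _ _ _ _ _ _⟩
  obtain ⟨e023, hD023⟩ : ∃ e, det3 (dualPt (x 0) (x' 0)) (dualPt (x 2) (x' 2)) (dualPt (x 3) (x' 3)) = FiveT.nf F (det3 (x 0) (x 2) (x 3)) e :=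
    ⟨_, FiveT.det3_dualPt _ _ _ _ _ _⟩
  obtain ⟨e024, hD024⟩ : ∃ e, det3 (dualPt (x 0) (x' 0)) (dualPt (x 2) (x' 2)) (dualPt (x 4) (x' 4)) = FiveT.nf F (det3 (x 0) (x 2) (x 4)) e :=
    ⟨_, FiveT.det3_dualPt _ _ _ _ _ _⟩
  obtain ⟨e034, hD034⟩ : ∃ e, det3 (dualPt (x 0) (x' 0)) (dualPt (x 3) (x' 3)) (dualPt (x 4) (x' 4)) = FiveT.nf F (det3 (x 0) (x 3) (x 4)) e :=
    ⟨_, FiveT.det3_dualPt _ _ _ _ _ _⟩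
  obtain ⟨e123, hD123⟩ : ∃ e, det3 (dualPt (x 1) (x' 1)) (dualPt (x 2) (x' 2)) (dualPt (x 3) (x' 3)) = FiveT.nf F (det3 (x 1) (x 2) (x 3)) e :=
    ⟨_, FiveT.det3_dualPt _ _ _ _ _ _⟩
  obtain ⟨e124, hD124⟩ : ∃ e, det3 (dualPt (x 1) (x' 1)) (dualPt (x 2) (x' 2)) (dualPt (x 4) (x' 4)) = FiveT.nf F (det3 (x 1) (x 2) (x 4)) e :=
    ⟨_, FiveT.det3_dualPt _ _ _ _ _ _⟩
  obtain ⟨e134, hD134⟩ : ∃ e, det3 (dualPt (x 1) (x' 1)) (dualPt (x 3) (x' 3)) (dualPt (x 4) (x' 4)) = FiveT.nf F (det3 (x 1) (x 3) (x 4)) e :=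
    ⟨_, FiveT.det3_dualPt _ _ _ _ _ _⟩
  obtain ⟨e234, hD234⟩ : ∃ e, det3 (dualPt (x 2) (x' 2)) (dualPt (x 3) (x' 3)) (dualPt (x 4) (x' 4)) = FiveT.nf F (det3 (x 2) (x 3) (x 4)) e :=
    ⟨_, FiveT.det3_dualPt _ _ _ _ _ _⟩
  have hu012 : IsUnit (det3 (dualPt (x 0) (x' 0)) (dualPt (x 1) (x' 1)) (dualPt (x 2) (x' 2))) := by rw [hD012]; exact FiveT.isUnit_nf _ hn012
  have hu013 : IsUnit (det3 (dualPt (x 0) (x' 0)) (dualPt (x 1) (x' 1)) (dualPt (x 3) (x' 3))) := by rw [hD013]; exact FiveT.isUnit_nf _ hn013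
  have hu014 : IsUnit (det3 (dualPt (x 0) (x' 0)) (dualPt (x 1) (x' 1)) (dualPt (x 4) (x' 4))) := by rw [hD014]; exact FiveT.isUnit_nf _ hn014
  have hu023 : IsUnit (det3 (dualPt (x 0) (x' 0)) (dualPt (x 2) (x' 2)) (dualPt (x 3) (x' 3))) := by rw [hD023]; exact FiveT.isUnit_nf _ hn023
  have hu024 : IsUnit (det3 (dualPt (x 0) (x' 0)) (dualPt (x 2) (x' 2)) (dualPt (x 4) (x' 4))) := by rw [hD024]; exact FiveT.isUnit_nf _ hn024
  have hu034 : IsUnit (det3 (dualPt (x 0) (x' 0)) (dualPt (x 3) (x' 3)) (dualPt (x 4) (x' 4))) := by rw [hD034]; exact FiveT.isUnit_nf _ hn034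
  have hu123 : IsUnit (det3 (dualPt (x 1) (x' 1)) (dualPt (x 2) (x' 2)) (dualPt (x 3) (x' 3))) := by rw [hD123]; exact FiveT.isUnit_nf _ hn123
  have hu124 : IsUnit (det3 (dualPt (x 1) (x' 1)) (dualPt (x 2) (x' 2)) (dualPt (x 4) (x' 4))) := by rw [hD124]; exact FiveT.isUnit_nf _ hn124
  have hu134 : IsUnit (det3 (dualPt (x 1) (x' 1)) (dualPt (x 3) (x' 3)) (dualPt (x 4) (x' 4))) := by rw [hD134]; exact FiveT.isUnit_nf _ hn134
  have hu234 : IsUnit (det3 (dualPt (x 2) (x' 2)) (dualPt (x 3) (x' 3)) (dualPt (x 4) (x' 4))) := by rw [hD234]; exact FiveT.isUnit_nf _ hn234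
  set A := projCrDual (dualPt (x 0) (x' 0)) (dualPt (x 1) (x' 1)) (dualPt (x 2) (x' 2)) (dualPt (x 3) (x' 3)) (dualPt (x 4) (x' 4)) with hAdef
  set B := projCrDual (dualPt (x 1) (x' 1)) (dualPt (x 0) (x' 0)) (dualPt (x 2) (x' 2)) (dualPt (x 3) (x' 3)) (dualPt (x 4) (x' 4)) with hBdef
  set R2 := projCrDual (dualPt (x 2) (x' 2)) (dualPt (x 0) (x' 0)) (dualPt (x 1) (x' 1)) (dualPt (x 3) (x' 3)) (dualPt (x 4) (x' 4)) with hR2def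
  set R3 := projCrDual (dualPt (x 3) (x' 3)) (dualPt (x 0) (x' 0)) (dualPt (x 1) (x' 1)) (dualPt (x 2) (x' 2)) (dualPt (x 4) (x' 4)) with hR3def
  set R4 := projCrDual (dualPt (x 4) (x' 4)) (dualPt (x 0) (x' 0)) (dualPt (x 1) (x' 1)) (dualPt (x 2) (x' 2)) (dualPt (x 3) (x' 3)) with hR4def
  set a0 := tCoeff A 0 with ha0def
  set a1 := tCoeff A 1 with ha1def
  set b0 := tCoeff B 0 with hb0def
  set b1 := tCoeff B 1 with hb1def
  set r2 := tCoeff R2 0 with hr2def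
  set s2 := tCoeff R2 1 with hs2def
  set r3 := tCoeff R3 0 with hr3def
  set s3 := tCoeff R3 1 with hs3def
  set r4 := tCoeff R4 0 with hr4def
  set s4 := tCoeff R4 1 with hs4def
  have hAdec : A = FiveT.nf F a0 a1 := FiveT.nf_decompose A
  have hBdec : B = FiveT.nf F b0 b1 := FiveT.nf_decompose B
  have hR2dec : R2 = FiveT.nf F r2 s2 := FiveT.nf_decompose R2
  have hR3dec : R3 = FiveT.nf F r3 s3 := FiveT.nf_decompose R3
  have hR4dec : R4 = FiveT.nf F r4 s4 := FiveT.nf_decompose R4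
  have hA' := FiveT.projCrDual_mul (dualPt (x 0) (x' 0)) (dualPt (x 1) (x' 1)) (dualPt (x 2) (x' 2)) (dualPt (x 3) (x' 3)) (dualPt (x 4) (x' 4))
    ((hu013.mul hu024))
  rw [← hAdef] at hA'
  have hA : A * (det3 (dualPt (x 0) (x' 0)) (dualPt (x 1) (x' 1)) (dualPt (x 3) (x' 3)) * det3 (dualPt (x 0) (x' 0)) (dualPt (x 2) (x' 2)) (dualPt (x 4) (x' 4))) = det3 (dualPt (x 0) (x' 0)) (dualPt (x 1) (x' 1)) (dualPt (x 4) (x' 4)) * det3 (dualPt (x 0) (x' 0)) (dualPt (x 2) (x' 2)) (dualPt (x 3) (x' 3)) := by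
    linear_combination hA'
  have hB' := FiveT.projCrDual_mul (dualPt (x 1) (x' 1)) (dualPt (x 0) (x' 0)) (dualPt (x 2) (x' 2)) (dualPt (x 3) (x' 3)) (dualPt (x 4) (x' 4))
    (by rw [show det3 (dualPt (x 1) (x' 1)) (dualPt (x 0) (x' 0)) (dualPt (x 3) (x' 3)) = -(det3 (dualPt (x 0) (x' 0)) (dualPt (x 1) (x' 1)) (dualPt (x 3) (x' 3))) from FiveT.det3_swap01 _ _ _]; exact (hu013.neg.mul hu124))
  rw [← hBdef] at hB'
  have hB : B * (det3 (dualPt (x 0) (x' 0)) (dualPt (x 1) (x' 1)) (dualPt (x 3) (x' 3)) * det3 (dualPt (x 1) (x' 1)) (dualPt (x 2) (x' 2)) (dualPt (x 4) (x' 4))) = det3 (dualPt (x 0) (x' 0)) (dualPt (x 1) (x' 1)) (dualPt (x 4) (x' 4)) * det3 (dualPt (x 1) (x' 1)) (dualPt (x 2) (x' 2)) (dualPt (x 3) (x' 3)) := by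
    rw [show det3 (dualPt (x 1) (x' 1)) (dualPt (x 0) (x' 0)) (dualPt (x 3) (x' 3)) = -(det3 (dualPt (x 0) (x' 0)) (dualPt (x 1) (x' 1)) (dualPt (x 3) (x' 3))) from FiveT.det3_swap01 _ _ _, show det3 (dualPt (x 1) (x' 1)) (dualPt (x 0) (x' 0)) (dualPt (x 4) (x' 4)) = -(det3 (dualPt (x 0) (x' 0)) (dualPt (x 1) (x' 1)) (dualPt (x 4) (x' 4))) from FiveT.det3_swap01 _ _ _] at hB'
    linear_combination -hB'
  have hR2' := FiveT.projCrDual_mul (dualPt (x 2) (x' 2)) (dualPt (x 0) (x' 0)) (dualPt (x 1) (x' 1)) (dualPt (x 3) (x' 3)) (dualPt (x 4) (x' 4))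
    (by rw [show det3 (dualPt (x 2) (x' 2)) (dualPt (x 0) (x' 0)) (dualPt (x 3) (x' 3)) = -(det3 (dualPt (x 0) (x' 0)) (dualPt (x 2) (x' 2)) (dualPt (x 3) (x' 3))) from FiveT.det3_swap01 _ _ _, show det3 (dualPt (x 2) (x' 2)) (dualPt (x 1) (x' 1)) (dualPt (x 4) (x' 4)) = -(det3 (dualPt (x 1) (x' 1)) (dualPt (x 2) (x' 2)) (dualPt (x 4) (x' 4))) from FiveT.det3_swap01 _ _ _]; exact (hu023.neg.mul hu124.neg))
  rw [← hR2def] at hR2'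
  have hR2 : R2 * (det3 (dualPt (x 0) (x' 0)) (dualPt (x 2) (x' 2)) (dualPt (x 3) (x' 3)) * det3 (dualPt (x 1) (x' 1)) (dualPt (x 2) (x' 2)) (dualPt (x 4) (x' 4))) = det3 (dualPt (x 0) (x' 0)) (dualPt (x 2) (x' 2)) (dualPt (x 4) (x' 4)) * det3 (dualPt (x 1) (x' 1)) (dualPt (x 2) (x' 2)) (dualPt (x 3) (x' 3)) := by
    rw [show det3 (dualPt (x 2) (x' 2)) (dualPt (x 0) (x' 0)) (dualPt (x 3) (x' 3)) = -(det3 (dualPt (x 0) (x' 0)) (dualPt (x 2) (x' 2)) (dualPt (x 3) (x' 3))) from FiveT.det3_swap01 _ _ _, show det3 (dualPt (x 2) (x' 2)) (dualPt (x 1) (x' 1)) (dualPt (x 4) (x' 4)) = -(det3 (dualPt (x 1) (x' 1)) (dualPt (x 2) (x' 2)) (dualPt (x 4) (x' 4))) from FiveT.det3_swap01 _ _ _, show det3 (dualPt (x 2) (x' 2)) (dualPt (x 0) (x' 0)) (dualPt (x 4) (x' 4)) = -(det3 (dualPt (x 0) (x' 0)) (dualPt (x 2) (x' 2)) (dualPt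 (x 4) (x' 4))) from FiveT.det3_swap01 _ _ _, show det3 (dualPt (x 2) (x' 2)) (dualPt (x 1) (x' 1)) (dualPt (x 3) (x' 3)) = -(det3 (dualPt (x 1) (x' 1)) (dualPt (x 2) (x' 2)) (dualPt (x 3) (x' 3))) from FiveT.det3_swap01 _ _ _] at hR2'
    linear_combination hR2'
  have hR3' := FiveT.projCrDual_mul (dualPt (x 3) (x' 3)) (dualPt (x 0) (x' 0)) (dualPt (x 1) (x' 1)) (dualPt (x 2) (x' 2)) (dualPt (x 4) (x' 4))
    (by rw [show det3 (dualPt (x 3) (x' 3)) (dualPt (x 0) (x' 0)) (dualPt (x 2) (x' 2)) = det3 (dualPt (x 0) (x' 0)) (dualPt (x 2) (x' 2)) (dualPt (x 3) (x' 3)) from FiveT.det3_rot _ _ _, show det3 (dualPt (x 3) (x' 3)) (dualPt (x 1) (x' 1)) (dualPt (x 4) (x' 4)) = -(det3 (dualPt (x 1) (x' 1)) (dualPt (x 3) (x' 3)) (dualPt (x 4) (x' 4))) from FiveT.det3_swap01 _ _ _]; exact (hu023.mul hu134.neg))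
  rw [← hR3def] at hR3'
  have hR3 : R3 * (det3 (dualPt (x 0) (x' 0)) (dualPt (x 2) (x' 2)) (dualPt (x 3) (x' 3)) * det3 (dualPt (x 1) (x' 1)) (dualPt (x 3) (x' 3)) (dualPt (x 4) (x' 4))) = det3 (dualPt (x 0) (x' 0)) (dualPt (x 3) (x' 3)) (dualPt (x 4) (x' 4)) * det3 (dualPt (x 1) (x' 1)) (dualPt (x 2) (x' 2)) (dualPt (x 3) (x' 3)) := by
    rw [show det3 (dualPt (x 3) (x' 3)) (dualPt (x 0) (x' 0)) (dualPt (x 2) (x' 2)) = det3 (dualPt (x 0) (x' 0)) (dualPt (x 2) (x' 2)) (dualPt (x 3) (x' 3)) from FiveT.det3_rot _ _ _, show det3 (dualPt (x 3) (x' 3)) (dualPt (x 1) (x' 1)) (dualPt (x 4) (x' 4)) = -(det3 (dualPt (x 1) (x' 1)) (dualPt (x 3) (x' 3)) (dualPt (x 4) (x' 4))) from FiveT.det3_swap01 _ _ _, show det3 (dualPt (x 3) (x' 3)) (dualPt (x 0) (x' 0)) (dualPt (x 4) (x' 4)) = -(det3 (dualPt (x 0) (x' 0)) (dualPt (x 3)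 (x' 3)) (dualPt (x 4) (x' 4))) from FiveT.det3_swap01 _ _ _, show det3 (dualPt (x 3) (x' 3)) (dualPt (x 1) (x' 1)) (dualPt (x 2) (x' 2)) = det3 (dualPt (x 1) (x' 1)) (dualPt (x 2) (x' 2)) (dualPt (x 3) (x' 3)) from FiveT.det3_rot _ _ _] at hR3'
    linear_combination -hR3'
  have hR4' := FiveT.projCrDual_mul (dualPt (x 4) (x' 4)) (dualPt (x 0) (x' 0)) (dualPt (x 1) (x' 1)) (dualPt (x 2) (x' 2)) (dualPt (x 3) (x' 3))
    (by rw [show det3 (dualPt (x 4) (x' 4)) (dualPt (x 0) (x' 0)) (dualPt (x 2) (x' 2)) = det3 (dualPt (x 0) (x' 0)) (dualPt (x 2) (x' 2)) (dualPt (x 4) (x' 4)) from FiveT.det3_rot _ _ _, show det3 (dualPt (x 4) (x' 4)) (dualPt (x 1) (x' 1)) (dualPt (x 3) (x' 3)) = det3 (dualPt (x 1) (x' 1)) (dualPt (x 3) (x' 3)) (dualPt (x 4) (x' 4)) from FiveT.det3_rot _ _ _]; exact (hu024.mul hu134))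
  rw [← hR4def] at hR4'
  have hR4 : R4 * (det3 (dualPt (x 0) (x' 0)) (dualPt (x 2) (x' 2)) (dualPt (x 4) (x' 4)) * det3 (dualPt (x 1) (x' 1)) (dualPt (x 3) (x' 3)) (dualPt (x 4) (x' 4))) = det3 (dualPt (x 0) (x' 0)) (dualPt (x 3) (x' 3)) (dualPt (x 4) (x' 4)) * det3 (dualPt (x 1) (x' 1)) (dualPt (x 2) (x' 2)) (dualPt (x 4) (x' 4)) := by
    rw [show det3 (dualPt (x 4) (x' 4)) (dualPt (x 0) (x' 0)) (dualPt (x 2) (x' 2)) = det3 (dualPt (x 0) (x' 0)) (dualPt (x 2) (x' 2)) (dualPt (x 4) (x' 4)) from FiveT.det3_rot _ _ _, show det3 (dualPt (x 4) (x' 4)) (dualPt (x 1) (x' 1)) (dualPt (x 3) (x' 3)) = det3 (dualPt (x 1) (x' 1)) (dualPt (x 3) (x' 3)) (dualPt (x 4) (x' 4)) from FiveT.det3_rot _ _ _, show det3 (dualPt (x 4) (x' 4)) (dualPt (x 0) (x' 0)) (dualPt (x 3) (x' 3)) = det3 (dualPt (x 0) (x' 0)) (dualPt (x 3) (x' 3))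 (dualPt (x 4) (x' 4)) from FiveT.det3_rot _ _ _, show det3 (dualPt (x 4) (x' 4)) (dualPt (x 1) (x' 1)) (dualPt (x 2) (x' 2)) = det3 (dualPt (x 1) (x' 1)) (dualPt (x 2) (x' 2)) (dualPt (x 4) (x' 4)) from FiveT.det3_rot _ _ _] at hR4'
    linear_combination hR4'
  have hP0 := FiveT.pluecker (dualPt (x 0) (x' 0)) (dualPt (x 1) (x' 1)) (dualPt (x 2) (x' 2)) (dualPt (x 3) (x' 3)) (dualPt (x 4) (x' 4))
  have hP1' := FiveT.pluecker (dualPt (x 1) (x' 1)) (dualPt (x 0) (x' 0)) (dualPt (x 2) (x' 2)) (dualPt (x 3) (x' 3)) (dualPt (x 4) (x' 4))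
  have hP2' := FiveT.pluecker (dualPt (x 2) (x' 2)) (dualPt (x 0) (x' 0)) (dualPt (x 1) (x' 1)) (dualPt (x 3) (x' 3)) (dualPt (x 4) (x' 4))
  rw [show det3 (dualPt (x 1) (x' 1)) (dualPt (x 0) (x' 0)) (dualPt (x 2) (x' 2)) = -(det3 (dualPt (x 0) (x' 0)) (dualPt (x 1) (x' 1)) (dualPt (x 2) (x' 2))) from FiveT.det3_swap01 _ _ _, show det3 (dualPt (x 1) (x' 1)) (dualPt (x 0) (x' 0)) (dualPt (x 3) (x' 3)) = -(det3 (dualPt (x 0) (x' 0)) (dualPt (x 1) (x' 1)) (dualPt (x 3) (x' 3))) from FiveT.det3_swap01 _ _ _, show det3 (dualPt (x 1) (x' 1)) (dualPt (x 0) (x' 0)) (dualPt (x 4) (x' 4)) = -(det3 (dualPt (x 0) (x' 0)) (dualPt (x 1) (x' 1)) (dualPt (x 4) (x' 4))) from FiveT.det3_swap01 _ _ _] at hP1'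
  have hP1 : det3 (dualPt (x 0) (x' 0)) (dualPt (x 1) (x' 1)) (dualPt (x 2) (x' 2)) * det3 (dualPt (x 1) (x' 1)) (dualPt (x 3) (x' 3)) (dualPt (x 4) (x' 4)) - det3 (dualPt (x 0) (x' 0)) (dualPt (x 1) (x' 1)) (dualPt (x 3) (x' 3)) * det3 (dualPt (x 1) (x' 1)) (dualPt (x 2) (x' 2)) (dualPt (x 4) (x' 4)) + det3 (dualPt (x 0) (x' 0)) (dualPt (x 1) (x' 1)) (dualPt (x 4) (x' 4)) * det3 (dualPt (x 1) (x' 1)) (dualPt (x 2) (x' 2)) (dualPt (x 3) (x' 3)) = 0 := by linear_combination -hP1'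
  rw [show det3 (dualPt (x 2) (x' 2)) (dualPt (x 0) (x' 0)) (dualPt (x 1) (x' 1)) = det3 (dualPt (x 0) (x' 0)) (dualPt (x 1) (x' 1)) (dualPt (x 2) (x' 2)) from FiveT.det3_rot _ _ _, show det3 (dualPt (x 2) (x' 2)) (dualPt (x 0) (x' 0)) (dualPt (x 3) (x' 3)) = -(det3 (dualPt (x 0) (x' 0)) (dualPt (x 2) (x' 2)) (dualPt (x 3) (x' 3))) from FiveT.det3_swap01 _ _ _, show det3 (dualPt (x 2) (x' 2)) (dualPt (x 0) (x' 0)) (dualPt (x 4) (x' 4)) = -(det3 (dualPt (x 0) (x' 0)) (dualPt (x 2) (x' 2)) (dualPt (x 4) (x' 4))) from FiveT.det3_swap01 _ _ _, show det3 (dualPt (x 2) (x' 2)) (dualPt (x 1) (x' 1)) (dualPt (x 3) (x' 3)) = -(det3 (dualPt (x 1) (x' 1)) (dualPt (x 2) (x' 2)) (dualPt (x 3) (x' 3))) from FiveT.det3_swap01 _ _ _, show det3 (dualPt (x 2) (x' 2)) (dualPt (x 1) (x' 1)) (dualPt (x 4) (x' 4)) = -(det3 (dualPt (x 1) (x' 1))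 (dualPt (x 2) (x' 2)) (dualPt (x 4) (x' 4))) from FiveT.det3_swap01 _ _ _] at hP2'
  have hP2 : det3 (dualPt (x 0) (x' 0)) (dualPt (x 1) (x' 1)) (dualPt (x 2) (x' 2)) * det3 (dualPt (x 2) (x' 2)) (dualPt (x 3) (x' 3)) (dualPt (x 4) (x' 4)) - det3 (dualPt (x 0) (x' 0)) (dualPt (x 2) (x' 2)) (dualPt (x 3) (x' 3)) * det3 (dualPt (x 1) (x' 1)) (dualPt (x 2) (x' 2)) (dualPt (x 4) (x' 4)) + det3 (dualPt (x 0) (x' 0)) (dualPt (x 2) (x' 2)) (dualPt (x 4) (x' 4)) * det3 (dualPt (x 1) (x' 1)) (dualPt (x 2) (x' 2)) (dualPt (x 3) (x' 3)) = 0 := by linear_combination hP2'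
  have h1A : (1 - A) * (det3 (dualPt (x 0) (x' 0)) (dualPt (x 1) (x' 1)) (dualPt (x 3) (x' 3)) * det3 (dualPt (x 0) (x' 0)) (dualPt (x 2) (x' 2)) (dualPt (x 4) (x' 4))) = det3 (dualPt (x 0) (x' 0)) (dualPt (x 1) (x' 1)) (dualPt (x 2) (x' 2)) * det3 (dualPt (x 0) (x' 0)) (dualPt (x 3) (x' 3)) (dualPt (x 4) (x' 4)) := by
    linear_combination -hA' - hP0
  have h1B : (1 - B) * (det3 (dualPt (x 0) (x' 0)) (dualPt (x 1) (x' 1)) (dualPt (x 3) (x' 3)) * det3 (dualPt (x 1) (x' 1)) (dualPt (x 2) (x' 2)) (dualPt (x 4) (x' 4))) = det3 (dualPt (x 0) (x' 0)) (dualPt (x 1) (x' 1)) (dualPt (x 2) (x' 2)) * det3 (dualPt (x 1) (x' 1)) (dualPt (x 3) (x' 3)) (dualPt (x 4) (x' 4)) := by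
    linear_combination -hB - hP1
  have h1R2 : (1 - R2) * (det3 (dualPt (x 0) (x' 0)) (dualPt (x 2) (x' 2)) (dualPt (x 3) (x' 3)) * det3 (dualPt (x 1) (x' 1)) (dualPt (x 2) (x' 2)) (dualPt (x 4) (x' 4))) = det3 (dualPt (x 0) (x' 0)) (dualPt (x 1) (x' 1)) (dualPt (x 2) (x' 2)) * det3 (dualPt (x 2) (x' 2)) (dualPt (x 3) (x' 3)) (dualPt (x 4) (x' 4)) := by
    linear_combination -hR2 - hP2
  have rel2 : R2 * A = B := by
    refine ((hu023.mul hu124).mul (hu013.mul hu024)).mul_right_cancel ?_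
    linear_combination (A * (det3 (dualPt (x 0) (x' 0)) (dualPt (x 1) (x' 1)) (dualPt (x 3) (x' 3)) * det3 (dualPt (x 0) (x' 0)) (dualPt (x 2) (x' 2)) (dualPt (x 4) (x' 4)))) * hR2 + (det3 (dualPt (x 0) (x' 0)) (dualPt (x 2) (x' 2)) (dualPt (x 4) (x' 4)) * det3 (dualPt (x 1) (x' 1)) (dualPt (x 2) (x' 2)) (dualPt (x 3) (x' 3))) * hA' - (det3 (dualPt (x 0) (x' 0)) (dualPt (x 2) (x' 2)) (dualPt (x 3) (x' 3)) * det3 (dualPt (x 0) (x' 0)) (dualPt (x 2) (x' 2)) (dualPt (x 4) (x' 4))) * hB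
  have rel3 : R3 * (A * (1 - B)) = B * (1 - A) := by
    refine ((hu023.mul hu134).mul ((hu013.mul hu024).mul (hu013.mul hu124))).mul_right_cancel ?_
    linear_combination ((A * (det3 (dualPt (x 0) (x' 0)) (dualPt (x 1) (x' 1)) (dualPt (x 3) (x' 3)) * det3 (dualPt (x 0) (x' 0)) (dualPt (x 2) (x' 2)) (dualPt (x 4) (x' 4)))) * ((1 - B) * (det3 (dualPt (x 0) (x' 0)) (dualPt (x 1) (x' 1)) (dualPt (x 3) (x' 3)) * det3 (dualPt (x 1) (x' 1)) (dualPt (x 2) (x' 2)) (dualPt (x 4) (x' 4))))) * hR3 + ((det3 (dualPt (x 0) (x' 0)) (dualPt (x 3) (x' 3)) (dualPt (x 4) (x' 4)) * det3 (dualPt (x 1) (x' 1)) (dualPt (x 2) (x' 2)) (dualPt (x 3) (x' 3))) * ((1 - B) * (det3 (dualPt (x 0) (x' 0)) (dualPt (x 1) (x' 1)) (dualPt (x 3) (x' 3)) * det3 (dualPt (x 1) (x' 1)) (dualPt (x 2) (x' 2)) (dualPt (x 4) (x' 4))))) * hA' + ((det3 (dualPt (x 0) (x' 0)) (dualPt (x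 3) (x' 3)) (dualPt (x 4) (x' 4)) * det3 (dualPt (x 1) (x' 1)) (dualPt (x 2) (x' 2)) (dualPt (x 3) (x' 3))) * (det3 (dualPt (x 0) (x' 0)) (dualPt (x 1) (x' 1)) (dualPt (x 4) (x' 4)) * det3 (dualPt (x 0) (x' 0)) (dualPt (x 2) (x' 2)) (dualPt (x 3) (x' 3)))) * h1B - (((1 - A) * (det3 (dualPt (x 0) (x' 0)) (dualPt (x 1) (x' 1)) (dualPt (x 3) (x' 3)) * det3 (dualPt (x 0) (x' 0)) (dualPt (x 2) (x' 2)) (dualPt (x 4) (x' 4)))) * (det3 (dualPt (x 0) (x' 0)) (dualPt (x 2) (x' 2)) (dualPt (x 3) (x' 3)) * det3 (dualPt (x 1) (x' 1)) (dualPt (x 3) (x' 3)) (dualPt (x 4) (x' 4)))) * hB - ((det3 (dualPt (x 0) (x' 0)) (dualPt (x 1) (x' 1)) (dualPt (x 4) (x' 4)) * det3 (dualPt (x 1) (x' 1)) (dualPt (x 2) (x' 2)) (dualPt (x 3) (x' 3))) * (det3 (dualPt (x 0) (x' 0)) (dualPt (x 2) (x' 2)) (dualPt (x 3) (x' 3))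 * det3 (dualPt (x 1) (x' 1)) (dualPt (x 3) (x' 3)) (dualPt (x 4) (x' 4)))) * h1A
  have rel4 : R4 * (1 - B) = 1 - A := by
    refine ((hu024.mul hu134).mul ((hu013.mul hu124).mul (hu013.mul hu024))).mul_right_cancel ?_
    linear_combination (((1 - B) * (det3 (dualPt (x 0) (x' 0)) (dualPt (x 1) (x' 1)) (dualPt (x 3) (x' 3)) * det3 (dualPt (x 1) (x' 1)) (dualPt (x 2) (x' 2)) (dualPt (x 4) (x' 4)))) * (det3 (dualPt (x 0) (x' 0)) (dualPt (x 1) (x' 1)) (dualPt (x 3) (x' 3)) * det3 (dualPt (x 0) (x' 0)) (dualPt (x 2) (x' 2)) (dualPt (x 4) (x' 4)))) * hR4 + ((det3 (dualPt (x 0) (x' 0)) (dualPt (x 3) (x' 3)) (dualPt (x 4) (x' 4)) * det3 (dualPt (x 1) (x' 1)) (dualPt (x 2) (x' 2)) (dualPt (x 4) (x' 4))) * (det3 (dualPt (x 0) (x' 0)) (dualPt (x 1) (x' 1)) (dualPt (x 3) (x' 3)) * det3 (dualPt (x 0) (x' 0)) (dualPt (x 2) (x' 2)) (dualPt (x 4)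 (x' 4)))) * h1B - ((det3 (dualPt (x 0) (x' 0)) (dualPt (x 2) (x' 2)) (dualPt (x 4) (x' 4)) * det3 (dualPt (x 1) (x' 1)) (dualPt (x 3) (x' 3)) (dualPt (x 4) (x' 4))) * (det3 (dualPt (x 0) (x' 0)) (dualPt (x 1) (x' 1)) (dualPt (x 3) (x' 3)) * det3 (dualPt (x 1) (x' 1)) (dualPt (x 2) (x' 2)) (dualPt (x 4) (x' 4)))) * h1A
  rw [hAdec, hD013, hD024, hD014, hD023, FiveT.nf_mul, FiveT.nf_mul, FiveT.nf_mul] at hA'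
  have hA_base := (FiveT.nf_injective hA').1
  rw [hBdec, hD013, hD124, hD014, hD123, FiveT.nf_mul, FiveT.nf_mul, FiveT.nf_mul] at hB
  have hB_base := (FiveT.nf_injective hB).1
  rw [hR2dec, hD023, hD124, hD024, hD123, FiveT.nf_mul, FiveT.nf_mul, FiveT.nf_mul] at hR2
  have hR2_base := (FiveT.nf_injective hR2).1
  rw [hR3dec, hD023, hD134, hD034, hD123, FiveT.nf_mul, FiveT.nf_mul, FiveT.nf_mul] at hR3
  have hR3_base := (FiveT.nf_injective hR3).1
  rw [hR4dec, hD024, hD134, hD034, hD124, FiveT.nf_mul, FiveT.nf_mul, FiveT.nf_mul] at hR4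
  have hR4_base := (FiveT.nf_injective hR4).1
  rw [hAdec, hD013, hD024, hD012, hD034, FiveT.nf_one_sub, FiveT.nf_mul, FiveT.nf_mul, FiveT.nf_mul] at h1A
  have h1A_base := (FiveT.nf_injective h1A).1
  rw [hBdec, hD013, hD124, hD012, hD134, FiveT.nf_one_sub, FiveT.nf_mul, FiveT.nf_mul, FiveT.nf_mul] at h1B
  have h1B_base := (FiveT.nf_injective h1B).1
  rw [hR2dec, hD023, hD124, hD012, hD234, FiveT.nf_one_sub, FiveT.nf_mul, FiveT.nf_mul, FiveT.nf_mul] at h1R2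
  have h1R2_base := (FiveT.nf_injective h1R2).1
  rw [hR2dec, hAdec, hBdec, FiveT.nf_mul] at rel2
  have rel2b := (FiveT.nf_injective rel2).1
  have rel2e := (FiveT.nf_injective rel2).2
  rw [hR3dec, hAdec, hBdec, FiveT.nf_one_sub, FiveT.nf_one_sub, FiveT.nf_mul, FiveT.nf_mul, FiveT.nf_mul] at rel3
  have rel3b := (FiveT.nf_injective rel3).1
  have rel3e := (FiveT.nf_injective rel3).2
  rw [hR4dec, hAdec, hBdec, FiveT.nf_one_sub, FiveT.nf_one_sub, FiveT.nf_mul] at rel4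
  have rel4b := (FiveT.nf_injective rel4).1
  have rel4e := (FiveT.nf_injective rel4).2
  have hna0 : a0 ≠ 0 := by
    intro hz; rw [hz, zero_mul] at hA_base; exact (mul_ne_zero hn014 hn023) hA_base.symm
  have hna1 : a0 ≠ 1 := by
    intro hz; rw [hz, sub_self, zero_mul] at h1A_base; exact (mul_ne_zero hn012 hn034) h1A_base.symm
  have hnb0 : b0 ≠ 0 := by
    intro hz; rw [hz, zero_mul] at hB_base; exact (mul_ne_zero hn014 hn123) hB_base.symm
  have hnb1 : b0 ≠ 1 := by
    intro hz; rw [hz, sub_self, zero_mul] at h1B_base; exact (mul_ne_zero hn012 hn134) h1B_base.symm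
  have hr2ne1 : r2 ≠ 1 := by
    intro hz; rw [hz, sub_self, zero_mul] at h1R2_base; exact (mul_ne_zero hn012 hn234) h1R2_base.symm
  have hab : a0 ≠ b0 := by
    intro hz
    apply hr2ne1
    have h2 : r2 * a0 = a0 := by rw [rel2b, hz]
    exact mul_right_cancel₀ hna0 (by rw [one_mul]; exact h2)
  have ga : projCr (x 0) (x 1) (x 2) (x 3) (x 4) = a0 := by
    show det3 (x 0) (x 1) (x 4) * det3 (x 0) (x 2) (x 3) / (det3 (x 0) (x 1) (x 3) * det3 (x 0) (x 2) (x 4)) = a0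
    rw [div_eq_iff (mul_ne_zero hn013 hn024)]; linear_combination -hA_base
  have gb : projCr (x 1) (x 0) (x 2) (x 3) (x 4) = b0 := by
    show det3 (x 1) (x 0) (x 4) * det3 (x 1) (x 2) (x 3) / (det3 (x 1) (x 0) (x 3) * det3 (x 1) (x 2) (x 4)) = b0
    rw [show det3 (x 1) (x 0) (x 4) = -(det3 (x 0) (x 1) (x 4)) from FiveT.det3_swap01 _ _ _, show det3 (x 1) (x 0) (x 3) = -(det3 (x 0) (x 1) (x 3)) from FiveT.det3_swap01 _ _ _]
    rw [div_eq_iff (mul_ne_zero (neg_ne_zero.2 hn013) hn124)]; linear_combination hB_base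
  have gr2 : projCr (x 2) (x 0) (x 1) (x 3) (x 4) = r2 := by
    show det3 (x 2) (x 0) (x 4) * det3 (x 2) (x 1) (x 3) / (det3 (x 2) (x 0) (x 3) * det3 (x 2) (x 1) (x 4)) = r2
    rw [show det3 (x 2) (x 0) (x 4) = -(det3 (x 0) (x 2) (x 4)) from FiveT.det3_swap01 _ _ _, show det3 (x 2) (x 1) (x 3) = -(det3 (x 1) (x 2) (x 3)) from FiveT.det3_swap01 _ _ _, show det3 (x 2) (x 0) (x 3) = -(det3 (x 0) (x 2) (x 3)) from FiveT.det3_swap01 _ _ _, show det3 (x 2) (x 1) (x 4) = -(det3 (x 1) (x 2) (x 4)) from FiveT.det3_swap01 _ _ _]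
    rw [div_eq_iff (mul_ne_zero (neg_ne_zero.2 hn023) (neg_ne_zero.2 hn124))]; linear_combination -hR2_base
  have gr3 : projCr (x 3) (x 0) (x 1) (x 2) (x 4) = r3 := by
    show det3 (x 3) (x 0) (x 4) * det3 (x 3) (x 1) (x 2) / (det3 (x 3) (x 0) (x 2) * det3 (x 3) (x 1) (x 4)) = r3
    rw [show det3 (x 3) (x 0) (x 4) = -(det3 (x 0) (x 3) (x 4)) from FiveT.det3_swap01 _ _ _, show det3 (x 3) (x 1) (x 2) = det3 (x 1) (x 2) (x 3) from FiveT.det3_rot _ _ _, show det3 (x 3) (x 0) (x 2) = det3 (x 0) (x 2) (x 3) from FiveT.det3_rot _ _ _, show det3 (x 3) (x 1) (x 4) = -(det3 (x 1) (x 3) (x 4)) from FiveT.det3_swap01 _ _ _]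
    rw [div_eq_iff (mul_ne_zero hn023 (neg_ne_zero.2 hn134))]; linear_combination hR3_base
  have gr4 : projCr (x 4) (x 0) (x 1) (x 2) (x 3) = r4 := by
    show det3 (x 4) (x 0) (x 3) * det3 (x 4) (x 1) (x 2) / (det3 (x 4) (x 0) (x 2) * det3 (x 4) (x 1) (x 3)) = r4
    rw [show det3 (x 4) (x 0) (x 3) = det3 (x 0) (x 3) (x 4) from FiveT.det3_rot _ _ _, show det3 (x 4) (x 1) (x 2) = det3 (x 1) (x 2) (x 4) from FiveT.det3_rot _ _ _, show det3 (x 4) (x 0) (x 2) = det3 (x 0) (x 2) (x 4) from FiveT.det3_rot _ _ _, show det3 (x 4) (x 1) (x 3) = det3 (x 1) (x 3) (x 4) from FiveT.det3_rot _ _ _]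
    rw [div_eq_iff (mul_ne_zero hn024 hn134)]; linear_combination -hR4_base
  rw [ga, gb, gr2, gr3, gr4]
  have hmem := FiveT.assemble a0 a1 b0 b1 r2 s2 r3 s3 r4 s4 hna0 hna1 hnb0 hnb1 hab rel2b rel2e rel3b rel3e rel4b rel4e
  have hfin : bracket F a0 a1 + -bracket F b0 b1 + bracket F r2 s2 + -bracket F r3 s3 + bracket F r4 s4 = bracket F a0 a1 - bracket F b0 b1 + bracket F r2 s2 - bracket F r3 s3 + bracket F r4 s4 := by abel
  rw [hfin]
  exact hmem

end
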